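/- For every k and every f : ℕ → ℕ → Fin k, there exist infinite sets H₁, H₂ ⊆ ℕ and a color d such that f x₁ x₂ = d for all x₁ ∈ H₁, x₂ ∈ H₂ with x₁ < x₂ (the Increasing Polarized Ramsey Theorem for pairs, proved outright). -/

import Mathlib

/-- λ(n): the 2-adic valuation of n (least exponent in binary expansion). -/
def lam (n : ℕ) : ℕ := padicValNat 2 n

/-- μ(n): ⌊log₂ n⌋ (greatest exponent in binary expansion). -/
def mu (n : ℕ) : ℕ := Nat.log 2 n

/-- Apartness condition for a sequence. -/
def Apart (h : ℕ → ℕ) : Prop := ∀ i j, i < j → mu (h i) < lam (h j)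

/-- Sum of adjacent elements h i + h (i+1) + ... + h j. -/
def adjSum (h : ℕ → ℕ) (i j : ℕ) : ℕ := ∑ t ∈ Finset.Icc i j, h t

section aux

open Finset

lemma lam_le_mu {n : ℕ} (hn : n ≠ 0) : lam n ≤ mu n := by
  have h := pow_padicValNat_dvd (p := 2) (n := n)
  exact Nat.le_log_of_pow_le one_lt_two (Nat.le_of_dvd (Nat.pos_of_ne_zero hn) h)

lemma two_pow_lam_dvd (n : ℕ) : 2 ^ lam n ∣ n := pow_padicValNat_dvd

lemma lt_two_pow_mu {n : ℕ} (hn : n ≠ 0) : n < 2 ^ (mu n + 1) :=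
  Nat.lt_pow_succ_log_self one_lt_two n

lemma two_pow_mu_le {n : ℕ} (hn : n ≠ 0) : 2 ^ mu n ≤ n :=
  Nat.pow_log_le_self 2 hn

lemma lam_eq {n v : ℕ} (hn : n ≠ 0) (h1 : 2 ^ v ∣ n) (h2 : ¬ 2 ^ (v + 1) ∣ n) :
    lam n = v := by
  have hle : v ≤ padicValNat 2 n := (padicValNat_dvd_iff_le hn).mp h1
  have hlt : ¬ (v + 1 ≤ padicValNat 2 n) := fun h => h2 ((padicValNat_dvd_iff_le hn).mpr h)
  unfold lam; omega

lemma mu_eq {n v : ℕ} (h1 : 2 ^ v ≤ n) (h2 : n < 2 ^ (v + 1)) : mu n = v :=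
  Nat.log_eq_of_pow_le_of_lt_pow h1 h2

/-- Key computation: for an "apart" positive sequence, the valuation and log of a sum of
adjacent elements come from the endpoints. -/
lemma sum_lam_mu (h : ℕ → ℕ) (hpos : ∀ n, 0 < h n)
    (hap : ∀ i j, i < j → mu (h i) < lam (h j)) (i : ℕ) :
    ∀ j, i ≤ j →
      lam (∑ t ∈ Finset.Icc i j, h t) = lam (h i) ∧
      mu (∑ t ∈ Finset.Icc i j, h t) = mu (h j) ∧
      (∑ t ∈ Finset.Icc i j, h t) < 2 ^ (mu (h j) + 1) := by
  intro j hj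
  induction j, hj using Nat.le_induction with
  | base =>
    rw [Finset.Icc_self, Finset.sum_singleton]
    exact ⟨rfl, rfl, lt_two_pow_mu (hpos i).ne'⟩
  | succ j hij ih =>
    obtain ⟨hlam, hmu, hlt⟩ := ih
    have hsum : ∑ t ∈ Finset.Icc i (j + 1), h t = (∑ t ∈ Finset.Icc i j, h t) + h (j + 1) :=
      Finset.sum_Icc_succ_top (by omega) h
    set S := ∑ t ∈ Finset.Icc i j, h t with hS
    have hSpos : 0 < S := by
      have : h i ≤ S := Finset.single_le_sum (f := h) (fun t _ => (hpos t).le)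
        (Finset.mem_Icc.mpr ⟨le_refl i, hij⟩)
      have := hpos i; omega
    have hapj : mu (h j) < lam (h (j + 1)) := hap j (j + 1) (by omega)
    have hapi : mu (h i) < lam (h (j + 1)) := hap i (j + 1) (by omega)
    have hLmu : lam (h (j + 1)) ≤ mu (h (j + 1)) := lam_le_mu (hpos (j + 1)).ne'
    -- divisibilities
    have hdvdL : 2 ^ lam (h (j + 1)) ∣ h (j + 1) := two_pow_lam_dvd _
    have hltmu : h (j + 1) < 2 ^ (mu (h (j + 1)) + 1) := lt_two_pow_mu (hpos (j + 1)).ne'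
    have hdvd2 : (2 : ℕ) ^ lam (h (j + 1)) ∣ 2 ^ (mu (h (j + 1)) + 1) :=
      pow_dvd_pow 2 (by omega)
    -- h (j+1) ≤ 2^(mu+1) - 2^lam
    have hkey : h (j + 1) + 2 ^ lam (h (j + 1)) ≤ 2 ^ (mu (h (j + 1)) + 1) := by
      have hd : 2 ^ lam (h (j + 1)) ∣ (2 ^ (mu (h (j + 1)) + 1) - h (j + 1)) :=
        Nat.dvd_sub hdvd2 hdvdL
      have hpos' : 0 < 2 ^ (mu (h (j + 1)) + 1) - h (j + 1) := by omega
      have := Nat.le_of_dvd hpos' hd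
      omega
    have hpow : (2 : ℕ) ^ (mu (h j) + 1) ≤ 2 ^ lam (h (j + 1)) :=
      Nat.pow_le_pow_right (by norm_num) (by omega)
    constructor
    · -- lam
      rw [hsum]
      have hvi : lam (h i) ≤ mu (h i) := lam_le_mu (hpos i).ne'
      have hd1 : 2 ^ lam (h i) ∣ S := hlam ▸ two_pow_lam_dvd S
      have hd2 : 2 ^ (lam (h i) + 1) ∣ h (j + 1) :=
        (pow_dvd_pow 2 (by omega)).trans hdvdL
      apply lam_eq (by have := hpos (j+1); omega)
      · exact Nat.dvd_add hd1 ((pow_dvd_pow 2 (by omega)).trans hdvdL)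
      · intro hcon
        have : 2 ^ (lam (h i) + 1) ∣ S := by
          have := Nat.dvd_sub hcon hd2
          simpa using this
        have hnd : ¬ 2 ^ (padicValNat 2 S + 1) ∣ S :=
          pow_succ_padicValNat_not_dvd hSpos.ne'
        rw [show padicValNat 2 S = lam S from rfl, hlam] at hnd
        exact hnd this
    · -- mu and bound
      have hup : S + h (j + 1) < 2 ^ (mu (h (j + 1)) + 1) := by
        have h2L : 2 ^ lam (h (j+1)) ≤ 2 ^ (mu (h (j+1)) + 1) := Nat.le_of_dvd (by positivity) hdvd2
        omega
      have hlow : 2 ^ mu (h (j + 1)) ≤ S + h (j + 1) := by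
        have := two_pow_mu_le (hpos (j + 1)).ne'
        omega
      rw [hsum]
      exact ⟨mu_eq hlow hup, hup⟩

/-- Pigeonhole: one can always find a block of the stream whose sum has large 2-adic
valuation. -/
lemma exists_block (a : Stream' ℕ+) (n m : ℕ) :
    ∃ p q : ℕ, n ≤ p ∧ p < q ∧ m < lam (∑ t ∈ Finset.Ico p q, (a.get t : ℕ)) := by
  classical
  set M := 2 ^ (m + 1) with hM
  have hMpos : 0 < M := by positivity
  set S : ℕ → ℕ := fun p => ∑ t ∈ Finset.range p, (a.get t : ℕ) with hSdef
  have hcard : (Finset.range M).card < (Finset.Icc n (n + M)).card := by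
    rw [Finset.card_range, Nat.card_Icc]; omega
  have hmaps : ∀ p ∈ Finset.Icc n (n + M), S p % M ∈ Finset.range M :=
    fun p _ => Finset.mem_range.mpr (Nat.mod_lt _ hMpos)
  obtain ⟨p, hp, q, hq, hne, hEq⟩ :=
    Finset.exists_ne_map_eq_of_card_lt_of_maps_to hcard hmaps
  -- wlog p < q
  wlog hpq : p < q generalizing p q
  · exact this q hq p hp hne.symm hEq.symm (by omega)
  have hble : n ≤ p := (Finset.mem_Icc.mp hp).1
  have hblock : S p + ∑ t ∈ Finset.Ico p q, (a.get t : ℕ) = S q := by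
    rw [hSdef]
    simp only [Finset.range_eq_Ico]
    exact Finset.sum_Ico_consecutive _ (Nat.zero_le p) hpq.le
  have hdvd : M ∣ (S q - S p) := by
    have : S p ≡ S q [MOD M] := hEq
    exact (Nat.modEq_iff_dvd' (by omega)).mp this
  have hBeq : ∑ t ∈ Finset.Ico p q, (a.get t : ℕ) = S q - S p := by omega
  have hBpos : 0 < ∑ t ∈ Finset.Ico p q, (a.get t : ℕ) :=
    Finset.sum_pos (fun t _ => (a.get t).pos) (by rw [Finset.nonempty_Ico]; exact hpq)
  refine ⟨p, q, hble, hpq, ?_⟩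
  have : m + 1 ≤ padicValNat 2 (∑ t ∈ Finset.Ico p q, (a.get t : ℕ)) := by
    apply (padicValNat_dvd_iff_le hBpos.ne').mp
    rw [hBeq]; exact hdvd
  unfold lam; omega

/-- Sums over arbitrary nonempty finite index sets belong to the FS-set (as natural numbers). -/
lemma FS_coe_sum_min (a : Stream' ℕ+) :
    ∀ s : Finset ℕ, ∀ hs : s.Nonempty,
      ∃ x ∈ Hindman.FS (a.drop (s.min' hs)), (x : ℕ) = ∑ i ∈ s, (a.get i : ℕ) := by
  classical
  intro s
  induction s using Finset.strongInduction with
  | _ s ih =>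
    intro hs
    set m := s.min' hs with hm
    rcases (s.erase m).eq_empty_or_nonempty with he | hne
    · have hsm : s = {m} := by
        apply Finset.eq_singleton_iff_unique_mem.mpr
        refine ⟨s.min'_mem hs, fun x hx => ?_⟩
        by_contra hxm
        have : x ∈ s.erase m := Finset.mem_erase.mpr ⟨hxm, hx⟩
        simp [he] at this
      refine ⟨a.get m, ?_, ?_⟩
      · have := Hindman.FS.head (a.drop m)
        rwa [Stream'.head_drop] at this
      · rw [hsm]; simp
    · obtain ⟨y, hy, hyval⟩ := ih (s.erase m) (Finset.erase_ssubset (s.min'_mem hs)) hne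
      set m' := (s.erase m).min' hne with hm'
      have hmm' : m + 1 ≤ m' :=
        Nat.succ_le_of_lt (Finset.min'_lt_of_mem_erase_min' _ _ (Finset.min'_mem _ _))
      obtain ⟨e, he'⟩ := Nat.exists_eq_add_of_le hmm'
      rw [he'] at hy
      have hy2 : y ∈ Hindman.FS ((a.drop m).tail) := by
        have hdrop : a.drop (m + 1 + e) = ((a.drop m).tail).drop e := by
          rw [Stream'.tail_eq_drop, Stream'.drop_drop, Stream'.drop_drop]
          exact congrArg (fun t => Stream'.drop t a) (by omega)
        rw [hdrop] at hy
        exact Hindman.FS_iter_tail_sub_FS _ e hy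
      refine ⟨(a.drop m).head + y, Hindman.FS.cons _ _ hy2, ?_⟩
      rw [PNat.add_coe, Stream'.head_drop, hyval]
      exact Finset.add_sum_erase _ (fun i => ((a.get i : ℕ)))
        (by rw [hm]; exact s.min'_mem hs)

lemma FS_coe_sum (a : Stream' ℕ+) (s : Finset ℕ) (hs : s.Nonempty) :
    ∃ x ∈ Hindman.FS a, (x : ℕ) = ∑ i ∈ s, (a.get i : ℕ) := by
  obtain ⟨x, hx, hv⟩ := FS_coe_sum_min a s hs
  exact ⟨x, Hindman.FS_iter_tail_sub_FS a _ hx, hv⟩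

/-- Simple pair iteration. -/
def iterPair (base : ℕ × ℕ) (step : ℕ × ℕ → ℕ × ℕ) : ℕ → ℕ × ℕ
  | 0 => base
  | n + 1 => step (iterPair base step n)

end aux

theorem increasing_polarized_ramsey (k : ℕ) (f : ℕ → ℕ → Fin k) :
    ∃ H₁ H₂ : Set ℕ, H₁.Infinite ∧ H₂.Infinite ∧
      ∃ d : Fin k, ∀ x₁ ∈ H₁, ∀ x₂ ∈ H₂, x₁ < x₂ → f x₁ x₂ = d := by
  classical
  -- apply Hindman's theorem to the coloring x ↦ f (lam x) (mu x) of ℕ+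
  obtain ⟨C, ⟨d, rfl⟩, a, hFS⟩ :=
    Hindman.exists_FS_of_finite_cover
      (Set.range fun d : Fin k => {x : ℕ+ | f (lam (x : ℕ)) (mu (x : ℕ)) = d})
      (Set.finite_range _)
      (fun x _ => ⟨_, ⟨f (lam (x : ℕ)) (mu (x : ℕ)), rfl⟩, rfl⟩)
  -- extract apart block sums
  choose p q hnp hpq hval using exists_block a
  set blk : ℕ → ℕ → ℕ := fun u v => ∑ t ∈ Finset.Ico u v, (a.get t : ℕ) with hblk
  set g : ℕ → ℕ × ℕ :=
    iterPair (p 0 0, q 0 0)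
      (fun pr => (p pr.2 (mu (blk pr.1 pr.2)), q pr.2 (mu (blk pr.1 pr.2)))) with hg
  set h : ℕ → ℕ := fun n => blk (g n).1 (g n).2 with hh
  have hgsucc : ∀ n, g (n + 1) =
      (p (g n).2 (mu (h n)), q (g n).2 (mu (h n))) := fun n => rfl
  have hlt : ∀ n, (g n).1 < (g n).2 := by
    intro n
    cases n with
    | zero => exact hpq 0 0
    | succ n => rw [hgsucc]; exact hpq _ _
  have hpos : ∀ n, 0 < h n := by
    intro n
    exact Finset.sum_pos (fun t _ => (a.get t).pos)
      (by rw [Finset.nonempty_Ico]; exact hlt n)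
  have hstep : ∀ n, mu (h n) < lam (h (n + 1)) := by
    intro n
    have h1 : h (n + 1) =
        ∑ t ∈ Finset.Ico (p (g n).2 (mu (h n))) (q (g n).2 (mu (h n))), (a.get t : ℕ) := by
      simp only [hh, hblk, hgsucc n]
    rw [h1]
    exact hval _ _
  have hap : ∀ i j, i < j → mu (h i) < lam (h j) := by
    intro i j hij
    induction j, hij using Nat.le_induction with
    | base => exact hstep i
    | succ j hij ih =>
      have h1 : lam (h j) ≤ mu (h j) := lam_le_mu (hpos j).ne'
      have h2 := hstep j
      omega
  have hord : ∀ n, (g n).2 ≤ (g (n + 1)).1 := by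
    intro n
    rw [hgsucc]
    exact hnp _ _
  have hordlt : ∀ i j, i < j → (g i).2 ≤ (g j).1 := by
    intro i j hij
    induction j, hij using Nat.le_induction with
    | base => exact hord i
    | succ j hij ih => exact ih.trans ((hlt j).le.trans (hord j))
  -- monochromaticity for pairs (lam (h i), mu (h j)), i ≤ j
  have hmono : ∀ i j, i ≤ j → f (lam (h i)) (mu (h j)) = d := by
    intro i j hij
    set s : Finset ℕ := (Finset.Icc i j).biUnion
      (fun t => Finset.Ico (g t).1 (g t).2) with hs
    have hdisj : ∀ t ∈ (Finset.Icc i j), ∀ t' ∈ (Finset.Icc i j), t ≠ t' →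
        Disjoint (Finset.Ico (g t).1 (g t).2) (Finset.Ico (g t').1 (g t').2) := by
      intro t _ t' _ htt'
      rcases htt'.lt_or_gt with hl | hl
      · apply Finset.disjoint_left.mpr
        intro x hx hx'
        have h1 := (Finset.mem_Ico.mp hx).2
        have h2 := (Finset.mem_Ico.mp hx').1
        have := hordlt t t' hl
        omega
      · apply Finset.disjoint_left.mpr
        intro x hx hx'
        have h1 := (Finset.mem_Ico.mp hx).1
        have h2 := (Finset.mem_Ico.mp hx').2
        have := hordlt t' t hl
        omega
    have hsum : ∑ x ∈ s, (a.get x : ℕ) = ∑ t ∈ Finset.Icc i j, h t := by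
      rw [hs, Finset.sum_biUnion hdisj]
    have hsne : s.Nonempty := by
      refine ⟨(g i).1, Finset.mem_biUnion.mpr ⟨i, Finset.mem_Icc.mpr ⟨le_refl i, hij⟩, ?_⟩⟩
      exact Finset.mem_Ico.mpr ⟨le_refl _, hlt i⟩
    obtain ⟨x, hx, hxval⟩ := FS_coe_sum a s hsne
    have hcol : f (lam (x : ℕ)) (mu (x : ℕ)) = d := hFS hx
    obtain ⟨hlam, hmu, _⟩ := sum_lam_mu h hpos hap i j hij
    rw [hxval, hsum, hlam, hmu] at hcol
    exact hcol
  -- the two sets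
  have hlamm : StrictMono (fun i => lam (h i)) := by
    intro i j hij
    have h1 : lam (h i) ≤ mu (h i) := lam_le_mu (hpos i).ne'
    have := hap i j hij
    simp only
    omega
  have hmum : StrictMono (fun i => mu (h i)) := by
    intro i j hij
    have h1 : lam (h j) ≤ mu (h j) := lam_le_mu (hpos j).ne'
    have := hap i j hij
    simp only
    omega
  refine ⟨Set.range (fun i => lam (h i)), Set.range (fun i => mu (h i)),
    Set.infinite_range_of_injective hlamm.injective,
    Set.infinite_range_of_injective hmum.injective, d, ?_⟩
  rintro x₁ ⟨i, rfl⟩ x₂ ⟨j, rfl⟩ hx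
  have hij : i ≤ j := by
    by_contra hcon
    have := hap j i (by omega)
    simp only at hx
    omega
  exact hmono i j hij
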